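/- Let ω ∈ R^d be Diophantine of class τ with constant ν(ω;τ), let N ≥ 1 be an integer and A > 0. If 2τ > d, then the point λ = 1 is a point of density for the set Λ(A;ω,τ,N) ⊂ C with respect to two-dimensional Lebesgue measure: the ratio of the Lebesgue measure of Λ(A;ω,τ,N) ∩ B(1,r) to the measure of the disk B(1,r) tends to 1 as r → 0^+. If moreover τ > d, then 1 is a point of density for Λ(A;ω,τ,N) ∩ S^1 inside the unit circle S^1 with respect to one-dimensional (arc-length) Lebesgue measure. -/

import Mathlib

open scoped Real ENNReal
open Matrix MeasureTheory Filter Asymptotics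

noncomputable section

namespace KAM

/-! ### Diophantine constants -/

/-- `|k| = ∑ |k_j|` for an integer frequency vector. -/
def intNorm {d : ℕ} (k : Fin d → ℤ) : ℝ := ∑ j, |(k j : ℝ)|

/-- `k · ω`. -/
def intDot {d : ℕ} (k : Fin d → ℤ) (ω : Fin d → ℝ) : ℝ := ∑ j, (k j : ℝ) * ω j

/-- `e^{2 π i k·ω}`. -/
def eDot {d : ℕ} (k : Fin d → ℤ) (ω : Fin d → ℝ) : ℂ :=
  Complex.exp (2 * Real.pi * Complex.I * (intDot k ω : ℂ))

/-- The Diophantine constant `ν(λ; ω, τ) ∈ [0,∞]` of a complex number `λ`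
with respect to `ω`, `ν(λ; ω, τ) = sup_{k ≠ 0} |e^{2πik·ω} − λ|⁻¹ |k|^{-τ}`. -/
def nuC {d : ℕ} (ω : Fin d → ℝ) (τ : ℝ) (lam : ℂ) : ℝ≥0∞ :=
  ⨆ k : {k : Fin d → ℤ // k ≠ 0},
    (ENNReal.ofReal ‖eDot k.1 ω - lam‖)⁻¹ * ENNReal.ofReal (intNorm k.1) ^ (-τ)

/-- The Diophantine constant `ν(ω; τ)` of the frequency `ω`. -/
def nuOmega {d : ℕ} (ω : Fin d → ℝ) (τ : ℝ) : ℝ≥0∞ := nuC ω τ 1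

/-- `ω` is Diophantine of class `τ` (i.e. `ν(ω;τ) < ∞`). -/
def IsDiophantine {d : ℕ} (ω : Fin d → ℝ) (τ : ℝ) : Prop := nuOmega ω τ ≠ ∞

/-! ### Strips, analytic function spaces on the complexified torus -/

/-- The closed strip `T^d_ρ` (as a subset of `ℂ^d`; functions on the torus are
represented by their `ℤ^d`-periodic lifts). -/
def Strip (d : ℕ) (ρ : ℝ) : Set (Fin d → ℂ) := {z | ∀ j, |(z j).im| ≤ ρ}

/-- The open strip (interior of `T^d_ρ`). -/
def StripO (d : ℕ) (ρ : ℝ) : Set (Fin d → ℂ) := {z | ∀ j, |(z j).im| < ρ}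

/-- Sup norm `‖·‖_ρ` over the strip `T^d_ρ`. -/
def stripNorm {d : ℕ} {E : Type*} [NormedAddCommGroup E] (ρ : ℝ)
    (f : (Fin d → ℂ) → E) : ℝ :=
  ⨆ z : Strip d ρ, ‖f z.1‖

/-- `ℤ^d`-periodicity (functions on the torus). -/
def ZPeriodic {d : ℕ} {E : Type*} (f : (Fin d → ℂ) → E) : Prop :=
  ∀ (z : Fin d → ℂ) (k : Fin d → ℤ), f (z + fun j => (k j : ℂ)) = f z

/-- Membership in `A_ρ`: analytic in the interior of the strip `T^d_ρ`,
continuous and bounded on the closed strip. -/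
structure MemA {d : ℕ} {E : Type*} [NormedAddCommGroup E] [NormedSpace ℂ E]
    (ρ : ℝ) (f : (Fin d → ℂ) → E) : Prop where
  analyticOn : AnalyticOn ℂ f (StripO d ρ)
  continuousOn : ContinuousOn f (Strip d ρ)
  bounded : ∃ M : ℝ, ∀ z ∈ Strip d ρ, ‖f z‖ ≤ M

/-- The translation `T_ω : θ ↦ θ + ω`. -/
def shift {d : ℕ} (ω : Fin d → ℝ) (z : Fin d → ℂ) : Fin d → ℂ :=
  z + fun j => (ω j : ℂ)

/-- Average over the torus `T^d` of a function on the complexified torus. -/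
def torusAvg {d : ℕ} {E : Type*} [NormedAddCommGroup E] [NormedSpace ℝ E]
    (f : (Fin d → ℂ) → E) : E :=
  ∫ θ in Set.Icc (0 : Fin d → ℝ) 1, f (fun j => (θ j : ℂ))

/-- Entrywise average over `T^d` of a matrix-valued function. -/
def matAvg {d m n : ℕ} (F : (Fin d → ℂ) → Matrix (Fin m) (Fin n) ℂ) :
    Matrix (Fin m) (Fin n) ℂ :=
  Matrix.of fun i j => torusAvg fun θ => F θ i j

/-- The lift of an integer vector `k ∈ ℤ^d` to the phase space `ℂ^{2d} = ℂ^d × ℂ^d`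
(`k` in the angle components, `0` in the action components). -/
def liftZ {d : ℕ} (k : Fin d → ℤ) : Fin (d + d) → ℂ :=
  Fin.addCases (motive := fun _ => ℂ) (fun j => (k j : ℂ)) fun _ => 0

/-- Quasi-periodicity of an embedding `K : T^d → M = T^d × B` (written in the
universal cover). -/
def QuasiPeriodic {d : ℕ} (K : (Fin d → ℂ) → Fin (d + d) → ℂ) : Prop :=
  ∀ (z : Fin d → ℂ) (k : Fin d → ℤ), K (z + fun j => (k j : ℂ)) = K z + liftZ k

/-- Periodicity of a map of the phase space `M = T^d × B` (written in the
universal cover). -/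
def PhasePeriodic {d : ℕ} (f : (Fin (d + d) → ℂ) → Fin (d + d) → ℂ) : Prop :=
  ∀ (x : Fin (d + d) → ℂ) (k : Fin d → ℤ), f (x + liftZ k) = f x + liftZ k

/-! ### Jacobians as matrices -/

/-- `A` is the Jacobian matrix of `f` at `z`. -/
def hasJacobianAt {m n : ℕ} (f : (Fin n → ℂ) → Fin m → ℂ)
    (A : Matrix (Fin m) (Fin n) ℂ) (z : Fin n → ℂ) : Prop :=
  HasFDerivAt f (LinearMap.toContinuousLinearMap (Matrix.mulVecLin A)) z

/-- Real version: `A` is the Jacobian matrix of `f` at `z`. -/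
def hasJacobianAtR {m n : ℕ} (f : (Fin n → ℝ) → Fin m → ℝ)
    (A : Matrix (Fin m) (Fin n) ℝ) (z : Fin n → ℝ) : Prop :=
  HasFDerivAt f (LinearMap.toContinuousLinearMap (Matrix.mulVecLin A)) z

/-! ### Adapted frames -/

/-- The normalization matrix `N = (DK^⊤ DK)⁻¹`. -/
def nMat {d : ℕ} {R : Type*} [CommRing R] (DK : Matrix (Fin (d + d)) (Fin d) R) :
    Matrix (Fin d) (Fin d) R := (DKᵀ * DK)⁻¹

/-- The adapted frame `M = [DK | J⁻¹ DK N]`, where `Jx` is the value of the matrix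
representing the symplectic form at the relevant point. -/
def frameM {d : ℕ} {R : Type*} [CommRing R] (Jx : Matrix (Fin (d + d)) (Fin (d + d)) R)
    (DK : Matrix (Fin (d + d)) (Fin d) R) : Matrix (Fin (d + d)) (Fin (d + d)) R :=
  Matrix.reindex (Equiv.refl _) finSumFinEquiv
    (Matrix.fromCols DK (Jx⁻¹ * DK * nMat DK))

/-- First `d` rows of a `2d × n` matrix. -/
def rowsFst {d n : ℕ} {R : Type*} (A : Matrix (Fin (d + d)) (Fin n) R) :
    Matrix (Fin d) (Fin n) R := A.submatrix (Fin.castAdd d) id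

/-- Last `d` rows of a `2d × n` matrix. -/
def rowsSnd {d n : ℕ} {R : Type*} (A : Matrix (Fin (d + d)) (Fin n) R) :
    Matrix (Fin d) (Fin n) R := A.submatrix (Fin.natAdd d) id

/-- Entrywise sup norm of a matrix. -/
def matNorm {m n : Type*} {α : Type*} [SeminormedAddCommGroup α] (A : Matrix m n α) : ℝ :=
  ⨆ i, ⨆ j, ‖A i j‖

/-- Sup over the strip `T^d_ρ` of the entrywise norm of a matrix-valued function. -/
def matStripNorm {d m n : ℕ} (ρ : ℝ) (F : (Fin d → ℂ) → Matrix (Fin m) (Fin n) ℂ) : ℝ :=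
  ⨆ z : Strip d ρ, matNorm (F z.1)

/-- The matrix `S(θ)` appearing in the automatic reducibility:
`S(θ) = N(θ+ω)^⊤ DK(θ+ω)^⊤ (Df∘K)(θ) (J⁻¹∘K)(θ) DK(θ) N(θ)
  − λ N(θ+ω)^⊤ DK(θ+ω)^⊤ (J⁻¹∘K)(θ+ω) DK(θ+ω) N(θ+ω)`. -/
def SmatC {d : ℕ} (lam : ℂ) (ω : Fin d → ℝ)
    (J : (Fin (d + d) → ℂ) → Matrix (Fin (d + d)) (Fin (d + d)) ℂ)
    (K : (Fin d → ℂ) → Fin (d + d) → ℂ)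
    (DK : (Fin d → ℂ) → Matrix (Fin (d + d)) (Fin d) ℂ)
    (DfK : (Fin d → ℂ) → Matrix (Fin (d + d)) (Fin (d + d)) ℂ)
    (θ : Fin d → ℂ) : Matrix (Fin d) (Fin d) ℂ :=
  (nMat (DK (shift ω θ)))ᵀ * (DK (shift ω θ))ᵀ * DfK θ * (J (K θ))⁻¹ * DK θ * nMat (DK θ)
    - lam • ((nMat (DK (shift ω θ)))ᵀ * (DK (shift ω θ))ᵀ * (J (K (shift ω θ)))⁻¹ *
        DK (shift ω θ) * nMat (DK (shift ω θ)))

/-- The matrix `Ã(θ) = (M ∘ T_ω)(θ)⁻¹ (D_μ f ∘ K)(θ)`. -/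
def AtildeC {d : ℕ} (ω : Fin d → ℝ)
    (J : (Fin (d + d) → ℂ) → Matrix (Fin (d + d)) (Fin (d + d)) ℂ)
    (K : (Fin d → ℂ) → Fin (d + d) → ℂ)
    (DK : (Fin d → ℂ) → Matrix (Fin (d + d)) (Fin d) ℂ)
    (DmufK : (Fin d → ℂ) → Matrix (Fin (d + d)) (Fin d) ℂ)
    (θ : Fin d → ℂ) : Matrix (Fin (d + d)) (Fin d) ℂ :=
  (frameM (J (K (shift ω θ))) (DK (shift ω θ)))⁻¹ * DmufK θ

/-- The non-degeneracy condition: there exists a zero-average solution `B_b` of the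
cohomology equation `λ B_b − B_b ∘ T_ω = −(Ã₂)⁰` such that the `2d × 2d` matrix
`[[avg S, avg (S B_b⁰) + avg Ã₁],[(λ−1) Id, avg Ã₂]]` has nonzero determinant. -/
def HNDat {d : ℕ} (lam : ℂ) (ω : Fin d → ℝ)
    (S A1 A2 : (Fin d → ℂ) → Matrix (Fin d) (Fin d) ℂ) : Prop :=
  ∃ Bb : (Fin d → ℂ) → Matrix (Fin d) (Fin d) ℂ,
    matAvg Bb = 0 ∧
    (∀ θ : Fin d → ℝ,
      lam • Bb (fun j => (θ j : ℂ)) - Bb (shift ω fun j => (θ j : ℂ))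
        = -(A2 (fun j => (θ j : ℂ)) - matAvg A2)) ∧
    (Matrix.fromBlocks (matAvg S) (matAvg (fun θ => S θ * Bb θ) + matAvg A1)
      ((lam - 1) • (1 : Matrix (Fin d) (Fin d) ℂ)) (matAvg A2)).det ≠ 0

/-- The non-degeneracy condition together with the bound `T` on the norm of the
inverse of the non-degeneracy matrix (the twist constant). -/
def H3twist {d : ℕ} (lam : ℂ) (ω : Fin d → ℝ) (TT : ℝ)
    (S A1 A2 : (Fin d → ℂ) → Matrix (Fin d) (Fin d) ℂ) : Prop :=
  ∃ Bb : (Fin d → ℂ) → Matrix (Fin d) (Fin d) ℂ,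
    matAvg Bb = 0 ∧
    (∀ θ : Fin d → ℝ,
      lam • Bb (fun j => (θ j : ℂ)) - Bb (shift ω fun j => (θ j : ℂ))
        = -(A2 (fun j => (θ j : ℂ)) - matAvg A2)) ∧
    (Matrix.fromBlocks (matAvg S) (matAvg (fun θ => S θ * Bb θ) + matAvg A1)
      ((lam - 1) • (1 : Matrix (Fin d) (Fin d) ℂ)) (matAvg A2)).det ≠ 0 ∧
    matNorm (Matrix.fromBlocks (matAvg S) (matAvg (fun θ => S θ * Bb θ) + matAvg A1)
      ((lam - 1) • (1 : Matrix (Fin d) (Fin d) ℂ)) (matAvg A2))⁻¹ ≤ TT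

/-- The normalization condition for `K` with respect to the reference embedding `K0`:
`∫_{T^d} [M(θ)⁻¹ (K(θ) − K0(θ))]₁ dθ = 0`. -/
def NormalizedWrt {d : ℕ}
    (J : (Fin (d + d) → ℂ) → Matrix (Fin (d + d)) (Fin (d + d)) ℂ)
    (K0 : (Fin d → ℂ) → Fin (d + d) → ℂ)
    (DK0 : (Fin d → ℂ) → Matrix (Fin (d + d)) (Fin d) ℂ)
    (K : (Fin d → ℂ) → Fin (d + d) → ℂ) : Prop :=
  ∀ i : Fin d,
    torusAvg (fun θ =>
      ((frameM (J (K0 θ)) (DK0 θ))⁻¹.mulVec (K θ - K0 θ)) (Fin.castAdd d i)) = 0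

/-! ### Symplectic structure and conformally symplectic families -/

/-- `J` represents an exact analytic symplectic form on `M = T^d × B`. -/
structure SympForm {d : ℕ}
    (J : (Fin (d + d) → ℂ) → Matrix (Fin (d + d)) (Fin (d + d)) ℂ) : Prop where
  antisymm : ∀ x, (J x)ᵀ = -J x
  nondeg : ∀ x, IsUnit (J x).det
  analytic : ∀ i j, AnalyticOnNhd ℂ (fun x => J x i j) Set.univ
  periodic : ∀ (x : Fin (d + d) → ℂ) (k : Fin d → ℤ), J (x + liftZ k) = J x
  exact' : ∃ (a : (Fin (d + d) → ℂ) → Fin (d + d) → ℂ)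
      (Da : (Fin (d + d) → ℂ) → Matrix (Fin (d + d)) (Fin (d + d)) ℂ),
      (∀ x, hasJacobianAt a (Da x) x) ∧ ∀ x, J x = (Da x)ᵀ - Da x

/-- The data of an analytic family `f_{μ,ε}` of maps of `M = T^d × B`, together with
its Jacobian `Df` in the phase-space variable, its derivative `Dμf` with respect to
the drift parameter `μ`, and the conformal factor `λ(ε)`. -/
structure ConfFamily (d : ℕ) where
  f : (Fin d → ℂ) → ℂ → (Fin (d + d) → ℂ) → Fin (d + d) → ℂ
  Df : (Fin d → ℂ) → ℂ → (Fin (d + d) → ℂ) → Matrix (Fin (d + d)) (Fin (d + d)) ℂ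
  Dmuf : (Fin d → ℂ) → ℂ → (Fin (d + d) → ℂ) → Matrix (Fin (d + d)) (Fin d) ℂ
  lam : ℂ → ℂ

/-- `F` is an analytic family of conformally symplectic maps (`f_{μ,ε}^* Ω = λ(ε) Ω`)
for `μ` in the open set `Γ`. -/
structure IsConfFamily {d : ℕ} (F : ConfFamily d)
    (J : (Fin (d + d) → ℂ) → Matrix (Fin (d + d)) (Fin (d + d)) ℂ)
    (Γ : Set (Fin d → ℂ)) : Prop where
  analytic : AnalyticOn ℂ
    (fun p : (Fin d → ℂ) × ℂ × (Fin (d + d) → ℂ) => F.f p.1 p.2.1 p.2.2)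
    {p : (Fin d → ℂ) × ℂ × (Fin (d + d) → ℂ) | p.1 ∈ Γ}
  jac_x : ∀ μ ∈ Γ, ∀ (ε : ℂ) (x : Fin (d + d) → ℂ),
    hasJacobianAt (F.f μ ε) (F.Df μ ε x) x
  jac_mu : ∀ μ ∈ Γ, ∀ (ε : ℂ) (x : Fin (d + d) → ℂ),
    HasFDerivAt (fun μ' => F.f μ' ε x)
      (LinearMap.toContinuousLinearMap (Matrix.mulVecLin (F.Dmuf μ ε x))) μ
  conf : ∀ μ ∈ Γ, ∀ (ε : ℂ) (x : Fin (d + d) → ℂ),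
    (F.Df μ ε x)ᵀ * J (F.f μ ε x) * F.Df μ ε x = F.lam ε • J x
  periodic : ∀ μ ∈ Γ, ∀ ε : ℂ, PhasePeriodic (F.f μ ε)

/-- Hypothesis Hλ: the conformal factor is analytic near `0`, `λ(0)=1` and
`λ(ε) − 1 = α ε^a + O(|ε|^{a+1})` with `a ≥ 1` an integer and `α ≠ 0`. -/
def Hlambda (lam : ℂ → ℂ) (a : ℕ) (α : ℂ) : Prop :=
  AnalyticAt ℂ lam 0 ∧ lam 0 = 1 ∧ 1 ≤ a ∧ α ≠ 0 ∧
    (fun ε => lam ε - 1 - α * ε ^ a) =O[nhds (0 : ℂ)] fun ε => ε ^ (a + 1)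

/-! ### The sets Λ, Υ, G -/

/-- `Λ(A; ω, τ, N) = {λ ∈ ℂ : ν(λ;ω,τ) |λ−1|^{N+1} ≤ A}`. -/
def LambdaSet {d : ℕ} (ω : Fin d → ℝ) (τ : ℝ) (N : ℕ) (A : ℝ) : Set ℂ :=
  {lam | nuC ω τ lam * ENNReal.ofReal (‖lam - 1‖ ^ (N + 1)) ≤ ENNReal.ofReal A}

/-- `Υ(A; ω, τ) = {λ ∈ ℂ : ν(λ;ω,τ) ≤ A}`. -/
def Upsilon {d : ℕ} (ω : Fin d → ℝ) (τ : ℝ) (A : ℝ) : Set ℂ :=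
  {lam | nuC ω τ lam ≤ ENNReal.ofReal A}

/-- `G(A; ω, τ, N) = {ε ∈ ℂ : ν(λ(ε);ω,τ) |λ(ε)−1|^{N+1} ≤ A}`. -/
def Gset {d : ℕ} (lam : ℂ → ℂ) (ω : Fin d → ℝ) (τ : ℝ) (N : ℕ) (A : ℝ) : Set ℂ :=
  {ε | nuC ω τ (lam ε) * ENNReal.ofReal (‖lam ε - 1‖ ^ (N + 1)) ≤ ENNReal.ofReal A}

/-- `G_{r₀}(A; ω, τ, N) = G(A; ω, τ, N) ∩ {|ε| ≤ r₀}`. -/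
def GsetR {d : ℕ} (lam : ℂ → ℂ) (ω : Fin d → ℝ) (τ : ℝ) (N : ℕ) (A r0 : ℝ) : Set ℂ :=
  Gset lam ω τ N A ∩ Metric.closedBall 0 r0

/-- `z0` is `m`-tangentially accessible from both sides in the set `C`. -/
def TangAccessBoth (C : Set ℂ) (m : ℕ) (z0 : ℂ) : Prop :=
  ∃ u : ℂ, ‖u‖ = 1 ∧ ∃ δ > (0 : ℝ), ∃ γ > (0 : ℝ),
    ∀ t s : ℝ, |t| < δ → |s| < δ → γ * |t| ^ m ≤ |s| →
      z0 + (t : ℂ) * u + (s : ℂ) * (starRingEnd ℂ) u ∈ C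

/-! ### Whitney differentiability -/

/-- `C^p`-Whitney differentiability of `h : D → E` (`D ⊆ ℂ`), with respect to a given
"norm" `nrm` on `E`, with (complex, one-dimensional) Whitney derivatives of order `≤ ℓ`,
`ℓ < p ≤ ℓ + 1`. -/
def WhitneyCp {E : Type*} [AddCommGroup E] [Module ℂ E] (nrm : E → ℝ)
    (D : Set ℂ) (h : ℂ → E) (ℓ : ℕ) (p : ℝ) : Prop :=
  ∃ M : ℝ, ∃ H : ℕ → ℂ → E,
    (∀ x ∈ D, H 0 x = h x) ∧
    (∀ k ≤ ℓ, ∀ x ∈ D, nrm (H k x) ≤ M) ∧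
    (∀ k ≤ ℓ, ∀ x ∈ D, ∀ ε > (0 : ℝ), ∃ δ > (0 : ℝ), ∀ y ∈ D, ‖y - x‖ < δ →
      nrm (H k y - H k x) < ε) ∧
    ∀ k ≤ ℓ, ∀ x ∈ D, ∀ y ∈ D,
      nrm (H k y - ∑ j ∈ Finset.range (ℓ - k + 1),
          ((j.factorial : ℂ)⁻¹ * (y - x) ^ j) • H (j + k) x)
        ≤ M * ‖y - x‖ ^ (p - k)

/-- `C^∞`-Whitney differentiability. -/
def WhitneyCinf {E : Type*} [AddCommGroup E] [Module ℂ E] (nrm : E → ℝ)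
    (D : Set ℂ) (h : ℂ → E) : Prop :=
  ∀ (ℓ : ℕ) (p : ℝ), (ℓ : ℝ) < p → p ≤ ℓ + 1 → WhitneyCp nrm D h ℓ p

/-! ### The standing hypotheses of the main theorem (maps) -/

/-- The data of the main theorem: a Diophantine frequency, an exact symplectic
structure, an analytic family of conformally symplectic maps with conformal factor
`λ(ε) = 1 + α ε^a + O(ε^{a+1})`, and a Lagrangian invariant torus `K0` for the
symplectic map `f_{μ0,0}`. -/
structure MainSetup (d : ℕ) where
  τ : ℝ
  ρ : ℝ
  ω : Fin d → ℝ
  J : (Fin (d + d) → ℂ) → Matrix (Fin (d + d)) (Fin (d + d)) ℂ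
  F : ConfFamily d
  Γ : Set (Fin d → ℂ)
  a : ℕ
  α : ℂ
  μ0 : Fin d → ℂ
  K0 : (Fin d → ℂ) → Fin (d + d) → ℂ
  DK0 : (Fin d → ℂ) → Matrix (Fin (d + d)) (Fin d) ℂ

/-- The hypotheses of the main theorem. -/
structure MainHyps {d : ℕ} (S : MainSetup d) : Prop where
  hd : 0 < d
  hτ : 0 < S.τ
  hρ : 0 < S.ρ
  hdio : IsDiophantine S.ω S.τ
  hJ : SympForm S.J
  hΓopen : IsOpen S.Γ
  hμ0 : S.μ0 ∈ S.Γ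
  hF : IsConfFamily S.F S.J S.Γ
  hlam : Hlambda S.F.lam S.a S.α
  hK0A : MemA S.ρ S.K0
  hK0per : QuasiPeriodic S.K0
  hDK0 : ∀ θ ∈ StripO d S.ρ, hasJacobianAt S.K0 (S.DK0 θ) θ
  hLag : ∀ θ ∈ StripO d S.ρ, (S.DK0 θ)ᵀ * S.J (S.K0 θ) * S.DK0 θ = 0
  hinv : ∀ θ ∈ Strip d S.ρ, S.F.f S.μ0 0 (S.K0 θ) = S.K0 (shift S.ω θ)
  hHND : HNDat 1 S.ω
    (SmatC 1 S.ω S.J S.K0 S.DK0 fun θ => S.F.Df S.μ0 0 (S.K0 θ))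
    (fun θ => rowsFst (AtildeC S.ω S.J S.K0 S.DK0 (fun θ' => S.F.Dmuf S.μ0 0 (S.K0 θ')) θ))
    (fun θ => rowsSnd (AtildeC S.ω S.J S.K0 S.DK0 (fun θ' => S.F.Dmuf S.μ0 0 (S.K0 θ')) θ))

end KAM
namespace KAM

section Aux


lemma norm_exp_mul_I_sub_one (θ : ℝ) :
    ‖Complex.exp ((θ:ℂ) * Complex.I) - 1‖ = 2 * |Real.sin (θ / 2)| := by
  have h : Complex.exp ((θ:ℂ) * Complex.I) - 1
      = ((Real.cos θ - 1 : ℝ) : ℂ) + ((Real.sin θ : ℝ) : ℂ) * Complex.I := by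
    rw [Complex.exp_mul_I]; push_cast; ring
  rw [h, Complex.norm_add_mul_I, Real.abs_sin_half]
  rw [show (Real.cos θ - 1)^2 + (Real.sin θ)^2 = 4 * ((1 - Real.cos θ)/2) from by
    nlinarith [Real.sin_sq_add_cos_sq θ]]
  rw [show (4 : ℝ) * ((1 - Real.cos θ)/2) = 2^2 * ((1 - Real.cos θ)/2) from by norm_num,
    Real.sqrt_mul (by positivity), Real.sqrt_sq (by norm_num)]

lemma norm_expTwoPi (u : ℝ) :
    ‖Complex.exp (2 * Real.pi * Complex.I * (u:ℂ)) - 1‖ = 2 * |Real.sin (Real.pi * u)| := by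
  rw [show (2 * Real.pi * Complex.I * (u:ℂ)) = ((2 * Real.pi * u : ℝ):ℂ) * Complex.I from by
    push_cast; ring, norm_exp_mul_I_sub_one]
  norm_num
  ring_nf

lemma norm_expTwoPi_le (u : ℝ) :
    ‖Complex.exp (2 * Real.pi * Complex.I * (u:ℂ)) - 1‖ ≤ 2 * Real.pi * |u| := by
  rw [norm_expTwoPi]
  calc 2 * |Real.sin (Real.pi * u)| ≤ 2 * |Real.pi * u| := by
        have := Real.abs_sin_le_abs (x := Real.pi * u); linarith
    _ = 2 * Real.pi * |u| := by
        rw [abs_mul, _root_.abs_of_nonneg Real.pi_pos.le]; ring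

lemma norm_expTwoPi_ge (u : ℝ) :
    4 * |u - round u| ≤ ‖Complex.exp (2 * Real.pi * Complex.I * (u:ℂ)) - 1‖ := by
  have hper : Complex.exp (2 * Real.pi * Complex.I * (u:ℂ))
      = Complex.exp (2 * Real.pi * Complex.I * ((u - round u : ℝ):ℂ)) := by
    rw [show (2 * Real.pi * Complex.I * (u:ℂ))
        = 2 * Real.pi * Complex.I * ((u - round u : ℝ):ℂ) + (round u : ℂ) * (2 * Real.pi * Complex.I) from by
      push_cast; ring, Complex.exp_add, Complex.exp_int_mul_two_pi_mul_I, mul_one]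
  rw [hper, norm_expTwoPi]
  have h1 : |Real.pi * (u - round u)| ≤ Real.pi / 2 := by
    rw [abs_mul, _root_.abs_of_nonneg Real.pi_pos.le]
    have := abs_sub_round u
    nlinarith [Real.pi_pos]
  have h2 := Real.mul_abs_le_abs_sin h1
  rw [abs_mul, _root_.abs_of_nonneg Real.pi_pos.le] at h2
  have hπ : (2 / Real.pi) * (Real.pi * |u - round u|) = 2 * |u - round u| := by
    field_simp
  rw [hπ] at h2
  linarith

lemma norm_expTwoPi_eq_one (u : ℝ) :
    ‖Complex.exp (2 * Real.pi * Complex.I * (u:ℂ))‖ = 1 := by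
  rw [show (2 * Real.pi * Complex.I * (u:ℂ)) = ((2 * Real.pi * u : ℝ):ℂ) * Complex.I from by
    push_cast; ring]
  exact Complex.norm_exp_ofReal_mul_I _


lemma tsum_pi_prod (h : ℤ → ℝ≥0∞) : ∀ d : ℕ,
    ∑' k : Fin d → ℤ, ∏ j, h (k j) = (∑' n : ℤ, h n) ^ d := by
  intro d
  induction d with
  | zero =>
    simp only [Finset.univ_eq_empty, Finset.prod_empty, pow_zero]
    rw [tsum_eq_single (fun i => (0:ℤ))]
    · intro b hb; exact absurd (Subsingleton.elim b _) hb
  | succ d ih =>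
    rw [← (Fin.consEquiv (fun _ : Fin (d+1) => ℤ)).tsum_eq]
    have : ∀ p : ℤ × (Fin d → ℤ),
        (∏ j, h ((Fin.consEquiv (fun _ : Fin (d+1) => ℤ)) p j))
          = h p.1 * ∏ j, h (p.2 j) := by
      intro p
      rw [Fin.prod_univ_succ]
      simp [Fin.consEquiv]
    rw [tsum_congr this,
      ENNReal.tsum_prod (f := fun a (b : Fin d → ℤ) => h a * ∏ j, h (b j))]
    simp_rw [ENNReal.tsum_mul_left, ENNReal.tsum_mul_right]
    rw [ih, pow_succ]
    ring


lemma summable_int_one_add (σ : ℝ) (hσ : 1 < σ) :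
    Summable (fun n : ℤ => (1 + |(n:ℝ)|) ^ (-σ)) := by
  have h := (Real.summable_one_div_int_add_rpow (1/2) σ).mpr hσ
  refine h.of_nonneg_of_le (fun n => Real.rpow_nonneg (by positivity) _) (fun n => ?_)
  have h0 : (0:ℝ) < |(n:ℝ) + 1/2| := by
    rcases le_or_gt 0 (n:ℝ) with h | h
    · rw [abs_of_nonneg (by linarith)]; linarith
    · have : (n:ℝ) ≤ -1 := by exact_mod_cast Int.le_of_lt_add_one (by exact_mod_cast h)
      rw [abs_of_nonpos (by linarith)]; linarith
  have hle : |(n:ℝ) + 1/2| ≤ 1 + |(n:ℝ)| := by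
    calc |(n:ℝ) + 1/2| ≤ |(n:ℝ)| + |(1/2 : ℝ)| := abs_add_le _ _
      _ = |(n:ℝ)| + 1/2 := by norm_num
      _ ≤ 1 + |(n:ℝ)| := by linarith
  rw [Real.rpow_neg (by positivity), ← one_div]
  rw [div_le_div_iff₀ (by positivity) (Real.rpow_pos_of_pos h0 σ)]
  calc 1 * |(n:ℝ) + 1/2| ^ σ = |(n:ℝ) + 1/2| ^ σ := one_mul _
    _ ≤ (1 + |(n:ℝ)|) ^ σ := Real.rpow_le_rpow h0.le hle (by linarith)
    _ = 1 * (1 + |(n:ℝ)|) ^ σ := (one_mul _).symm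

lemma tsum_int_one_add_lt_top (σ : ℝ) (hσ : 1 < σ) :
    ∑' n : ℤ, ENNReal.ofReal ((1 + |(n:ℝ)|) ^ (-σ)) ≠ ∞ := by
  rw [← ENNReal.ofReal_tsum_of_nonneg (fun n => Real.rpow_nonneg (by positivity) _)
    (summable_int_one_add σ hσ)]
  exact ENNReal.ofReal_ne_top


lemma real_bound {d : ℕ} (hd : 0 < d) {τ : ℝ} (hτ0 : 0 < τ) (k : Fin d → ℤ) (hk : k ≠ 0) :
    (∑ j, |(k j : ℝ)|) ^ (-τ) ≤ 2 ^ τ * ∏ j, (1 + |(k j : ℝ)|) ^ (-(τ / d)) := by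
  set n : ℝ := ∑ j, |(k j : ℝ)| with hn
  have hn1 : 1 ≤ n := by
    obtain ⟨j, hj⟩ := Function.ne_iff.mp hk
    have h1 : (1:ℝ) ≤ |(k j : ℝ)| := by
      rw [← Int.cast_abs]
      exact_mod_cast Int.one_le_abs (by simpa using hj)
    exact h1.trans (Finset.single_le_sum (f := fun i => |(k i : ℝ)|)
      (fun i _ => abs_nonneg _) (Finset.mem_univ j))
  have hn0 : 0 < n := by linarith
  have hfac : ∀ j ∈ Finset.univ, 1 + |(k j : ℝ)| ≤ 2 * n := by
    intro j _
    have : |(k j : ℝ)| ≤ n := Finset.single_le_sum (f := fun i => |(k i : ℝ)|)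
      (fun i _ => abs_nonneg _) (Finset.mem_univ j)
    linarith
  have hprod : ∏ j, (1 + |(k j : ℝ)|) ≤ (2 * n) ^ d := by
    calc ∏ j, (1 + |(k j : ℝ)|) ≤ ∏ _j : Fin d, (2 * n) :=
          Finset.prod_le_prod (fun j _ => by positivity) hfac
      _ = (2 * n) ^ d := by simp
  have hprodpos : 0 < ∏ j, (1 + |(k j : ℝ)|) :=
    Finset.prod_pos fun j _ => by positivity
  have key : (2 * n) ^ (-τ) ≤ (∏ j, (1 + |(k j : ℝ)|)) ^ (-(τ / d)) := by
    have h1 : ((2*n) ^ d : ℝ) ^ (-(τ/d)) ≤ (∏ j, (1 + |(k j : ℝ)|)) ^ (-(τ/d)) :=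
      Real.rpow_le_rpow_of_nonpos hprodpos hprod (by rw [neg_nonpos]; positivity)
    calc (2*n) ^ (-τ) = ((2*n) ^ (d:ℝ)) ^ (-(τ/d)) := by
          rw [← Real.rpow_mul (by positivity)]
          congr 1
          field_simp
        _ = ((2*n) ^ d : ℝ) ^ (-(τ/d)) := by rw [Real.rpow_natCast]
        _ ≤ _ := h1
  have hsplit : (2 * n) ^ (-τ) = 2 ^ (-τ) * n ^ (-τ) :=
    Real.mul_rpow (by norm_num) hn0.le
  have hprodsplit : (∏ j, (1 + |(k j : ℝ)|)) ^ (-(τ/d)) = ∏ j, (1 + |(k j : ℝ)|) ^ (-(τ/d)) :=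
    (Real.finset_prod_rpow _ _ (fun j _ => by positivity) _).symm
  rw [hprodsplit] at key
  rw [hsplit] at key
  have h2 : (0:ℝ) < 2 ^ τ := Real.rpow_pos_of_pos (by norm_num) τ
  have h2' : (2:ℝ) ^ (-τ) = (2 ^ τ)⁻¹ := by rw [Real.rpow_neg (by norm_num)]
  calc n ^ (-τ) = 2 ^ τ * (2 ^ (-τ) * n ^ (-τ)) := by
        rw [h2', ← mul_assoc, mul_inv_cancel₀ h2.ne', one_mul]
    _ ≤ 2 ^ τ * ∏ j, (1 + |(k j : ℝ)|) ^ (-(τ/d)) := by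
        exact mul_le_mul_of_nonneg_left key h2.le

lemma key_tsum_ne_top {d : ℕ} (hd : 0 < d) {τ : ℝ} (hτ : (d:ℝ) < τ) :
    ∑' k : {k : Fin d → ℤ // k ≠ 0},
      ENNReal.ofReal ((∑ j, |(k.1 j : ℝ)|) ^ (-τ)) ≠ ∞ := by
  have hτ0 : 0 < τ := lt_of_le_of_lt (by positivity) hτ
  have hσ : 1 < τ / d := (one_lt_div (by exact_mod_cast hd)).mpr hτ
  set F : (Fin d → ℤ) → ℝ≥0∞ := fun k => ∏ j, ENNReal.ofReal ((1 + |(k j : ℝ)|) ^ (-(τ/d)))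
    with hF
  have hbound : ∀ k : {k : Fin d → ℤ // k ≠ 0},
      ENNReal.ofReal ((∑ j, |(k.1 j : ℝ)|) ^ (-τ)) ≤ ENNReal.ofReal (2 ^ τ) * F k.1 := by
    intro k
    calc ENNReal.ofReal ((∑ j, |(k.1 j : ℝ)|) ^ (-τ))
        ≤ ENNReal.ofReal (2 ^ τ * ∏ j, (1 + |(k.1 j : ℝ)|) ^ (-(τ/d))) :=
          ENNReal.ofReal_le_ofReal (real_bound hd hτ0 k.1 k.2)
      _ = ENNReal.ofReal (2 ^ τ) * ENNReal.ofReal (∏ j, (1 + |(k.1 j : ℝ)|) ^ (-(τ/d))) :=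
          ENNReal.ofReal_mul (by positivity)
      _ = ENNReal.ofReal (2 ^ τ) * F k.1 := by
          rw [hF, ENNReal.ofReal_prod_of_nonneg (fun j _ => by positivity)]
  have htop : ∑' k : Fin d → ℤ, F k ≠ ∞ := by
    rw [hF]
    have := tsum_pi_prod (fun n : ℤ => ENNReal.ofReal ((1 + |(n:ℝ)|) ^ (-(τ/d)))) d
    rw [this]
    exact ENNReal.pow_ne_top (tsum_int_one_add_lt_top _ hσ)
  have hsub : ∑' k : {k : Fin d → ℤ // k ≠ 0}, F k.1 ≤ ∑' k : Fin d → ℤ, F k := by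
    calc ∑' k : {k : Fin d → ℤ // k ≠ 0}, F k.1
        = ∑' k : Fin d → ℤ, Set.indicator {k : Fin d → ℤ | k ≠ 0} F k :=
          tsum_subtype {k : Fin d → ℤ | k ≠ 0} F
      _ ≤ ∑' k : Fin d → ℤ, F k :=
          ENNReal.tsum_le_tsum fun a => Set.indicator_le_self _ _ a
  have hle : ∑' k : {k : Fin d → ℤ // k ≠ 0}, ENNReal.ofReal ((∑ j, |(k.1 j : ℝ)|) ^ (-τ))
      ≤ ENNReal.ofReal (2 ^ τ) * ∑' k : {k : Fin d → ℤ // k ≠ 0}, F k.1 := by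
    calc ∑' k : {k : Fin d → ℤ // k ≠ 0}, ENNReal.ofReal ((∑ j, |(k.1 j : ℝ)|) ^ (-τ))
        ≤ ∑' k : {k : Fin d → ℤ // k ≠ 0}, ENNReal.ofReal (2 ^ τ) * F k.1 :=
          ENNReal.tsum_le_tsum hbound
      _ = ENNReal.ofReal (2 ^ τ) * ∑' k : {k : Fin d → ℤ // k ≠ 0}, F k.1 :=
          ENNReal.tsum_mul_left
  exact ne_top_of_le_ne_top
    (ENNReal.mul_ne_top ENNReal.ofReal_ne_top (ne_top_of_le_ne_top htop hsub)) hle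



lemma one_le_intNorm {d : ℕ} {k : Fin d → ℤ} (hk : k ≠ 0) : 1 ≤ intNorm k := by
  obtain ⟨j, hj⟩ := Function.ne_iff.mp hk
  have h1 : (1:ℝ) ≤ |(k j : ℝ)| := by
    rw [← Int.cast_abs]
    exact_mod_cast Int.one_le_abs (by simpa using hj)
  exact h1.trans (Finset.single_le_sum (f := fun i => |(k i : ℝ)|)
    (fun i _ => abs_nonneg _) (Finset.mem_univ j))

lemma intNorm_pos {d : ℕ} {k : Fin d → ℤ} (hk : k ≠ 0) : 0 < intNorm k :=
  lt_of_lt_of_le one_pos (one_le_intNorm hk)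

lemma exists_bad_mode {d : ℕ} {ω : Fin d → ℝ} {τ : ℝ} {N : ℕ} {A : ℝ} {lam : ℂ}
    (h : lam ∉ LambdaSet ω τ N A) :
    ∃ k : {k : Fin d → ℤ // k ≠ 0}, ENNReal.ofReal A <
      (ENNReal.ofReal ‖eDot k.1 ω - lam‖)⁻¹ * ENNReal.ofReal (intNorm k.1) ^ (-τ)
        * ENNReal.ofReal (‖lam - 1‖ ^ (N+1)) := by
  simp only [LambdaSet, Set.mem_setOf_eq, not_le] at h
  rw [nuC, ENNReal.iSup_mul] at h
  exact lt_iSup_iff.mp h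

end Aux

set_option maxHeartbeats 1000000

/-- if `2τ > d` then `λ = 1` is a point of density (for
two-dimensional Lebesgue measure) of the set `Λ(A;ω,τ,N)`; if moreover `τ > d`,
then `1` is a point of density of `Λ(A;ω,τ,N) ∩ S¹` inside the unit circle (for
arc-length measure, the circle being parameterized by `x ↦ e^{2πix}`). -/
theorem statement7 (d : ℕ) (hd : 0 < d) (ω : Fin d → ℝ) (τ : ℝ) (hτ : 0 < τ)
    (hdio : IsDiophantine ω τ) (N : ℕ) (hN : 1 ≤ N) (A : ℝ) (hA : 0 < A)
    (h2τ : (d : ℝ) < 2 * τ) :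
    Filter.Tendsto
      (fun r : ℝ =>
        volume (LambdaSet ω τ N A ∩ Metric.ball (1 : ℂ) r) / volume (Metric.ball (1 : ℂ) r))
      (nhdsWithin 0 (Set.Ioi 0)) (nhds 1) ∧
    ((d : ℝ) < τ →
      Filter.Tendsto
        (fun r : ℝ =>
          volume {x ∈ Set.Ioo (-r) r |
              Complex.exp (2 * Real.pi * Complex.I * (x : ℂ)) ∈ LambdaSet ω τ N A}
            / ENNReal.ofReal (2 * r))
        (nhdsWithin 0 (Set.Ioi 0)) (nhds 1)) := by
  constructor
  · -- two-dimensional density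
    set Λ : Set ℂ := LambdaSet ω τ N A with hΛ
    have hN0 : N ≠ 0 := Nat.one_le_iff_ne_zero.mp hN
    have hπ := Real.pi_pos
    -- lower comparison function
    have hgt : Filter.Tendsto (fun r : ℝ => ENNReal.ofReal (1 - (12*r^N/A + 4*r)/Real.pi))
        (nhdsWithin 0 (Set.Ioi 0)) (nhds 1) := by
      have hc : Continuous (fun r : ℝ => 1 - (12*r^N/A + 4*r)/Real.pi) := by
        fun_prop
      have h0 : (fun r : ℝ => 1 - (12*r^N/A + 4*r)/Real.pi) 0 = 1 := by
        simp [zero_pow hN0]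
      have ht : Filter.Tendsto (fun r : ℝ => 1 - (12*r^N/A + 4*r)/Real.pi)
          (nhdsWithin 0 (Set.Ioi 0)) (nhds 1) := by
        have h2 := hc.tendsto 0
        norm_num [zero_pow hN0] at h2
        exact h2.mono_left nhdsWithin_le_nhds
      have := (ENNReal.continuous_ofReal.tendsto 1).comp ht
      simpa [Function.comp_def] using this
    refine tendsto_of_tendsto_of_tendsto_of_le_of_le' hgt tendsto_const_nhds ?_ ?_
    · -- lower bound eventually
      filter_upwards [Ioo_mem_nhdsGT_of_mem (Set.mem_Ico.mpr ⟨le_refl (0:ℝ), one_pos⟩)]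
        with r hr
      obtain ⟨hr0, hr1⟩ := hr
      set c : ℝ := 3 * r^(N+1)/A + r^2 with hc
      have hcpos : 0 < c := by positivity
      -- bad set is inside a thin rectangle
      have hsub : Metric.ball (1:ℂ) r \ Λ ⊆
          Complex.measurableEquivRealProd ⁻¹'
            (Set.Icc (1-c) (1+c) ×ˢ Set.Icc (-r) r) := by
        rintro z ⟨hzB, hzΛ⟩
        have hzb : ‖z - 1‖ < r := by
          simpa [Complex.dist_eq] using Metric.mem_ball.mp hzB
        obtain ⟨k, hk⟩ := exists_bad_mode hzΛ
        set t : ℝ := |‖z‖ - 1| with htdef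
        have hb1 : ‖eDot k.1 ω‖ = 1 := norm_expTwoPi_eq_one (intDot k.1 ω)
        have ht_le_b : t ≤ ‖eDot k.1 ω - z‖ := by
          have := abs_norm_sub_norm_le (eDot k.1 ω) z
          rw [hb1] at this
          rwa [htdef, abs_sub_comm]
        have hterm2 : (ENNReal.ofReal (intNorm k.1)) ^ (-τ) ≤ 1 :=
          ENNReal.rpow_le_one_of_one_le_of_neg
            (ENNReal.one_le_ofReal.mpr (one_le_intNorm k.2)) (neg_lt_zero.mpr hτ)
        have hmono : (ENNReal.ofReal ‖eDot k.1 ω - z‖)⁻¹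
              * ENNReal.ofReal (intNorm k.1) ^ (-τ) * ENNReal.ofReal (‖z - 1‖ ^ (N+1))
            ≤ (ENNReal.ofReal t)⁻¹ * ENNReal.ofReal (‖z - 1‖ ^ (N+1)) := by
          have h1 : (ENNReal.ofReal ‖eDot k.1 ω - z‖)⁻¹ ≤ (ENNReal.ofReal t)⁻¹ :=
            ENNReal.inv_le_inv' (ENNReal.ofReal_le_ofReal ht_le_b)
          calc (ENNReal.ofReal ‖eDot k.1 ω - z‖)⁻¹
                * ENNReal.ofReal (intNorm k.1) ^ (-τ) * ENNReal.ofReal (‖z - 1‖ ^ (N+1))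
              ≤ (ENNReal.ofReal t)⁻¹ * 1 * ENNReal.ofReal (‖z - 1‖ ^ (N+1)) :=
                mul_le_mul' (mul_le_mul' h1 hterm2) le_rfl
            _ = (ENNReal.ofReal t)⁻¹ * ENNReal.ofReal (‖z - 1‖ ^ (N+1)) := by
                rw [mul_one]
        have hAS : ENNReal.ofReal A
            < (ENNReal.ofReal t)⁻¹ * ENNReal.ofReal (‖z - 1‖ ^ (N+1)) :=
          lt_of_lt_of_le hk hmono
        have hsr : ‖z - 1‖ ^ (N+1) ≤ r^(N+1) :=
          pow_le_pow_left₀ (norm_nonneg _) hzb.le _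
        have ht : t < r^(N+1)/A := by
          rcases (abs_nonneg (‖z‖ - 1)).eq_or_lt with h0 | ht0
          · have h0' : t = 0 := by rw [htdef, ← h0]
            rw [h0']; positivity
          · rw [← ENNReal.ofReal_inv_of_pos ht0,
              ← ENNReal.ofReal_mul (by positivity)] at hAS
            have hAS' : A < t⁻¹ * ‖z - 1‖ ^ (N+1) :=
              (ENNReal.ofReal_lt_ofReal_iff_of_nonneg hA.le).mp hAS
            rw [lt_div_iff₀ hA]
            have := (mul_lt_mul_of_pos_left hAS' ht0)
            rw [← mul_assoc, mul_inv_cancel₀ ht0.ne', one_mul] at this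
            nlinarith
        -- geometry
        have hre : |z.re - 1| ≤ ‖z - 1‖ := by
          have := Complex.abs_re_le_norm (z - 1)
          simpa using this
        have him : |z.im| ≤ ‖z - 1‖ := by
          have := Complex.abs_im_le_norm (z - 1)
          simpa using this
        have hnz : ‖z‖ < 2 := by
          calc ‖z‖ = ‖(z - 1) + 1‖ := by ring_nf
            _ ≤ ‖z - 1‖ + 1 := by simpa using norm_add_le (z - 1) 1
            _ < 2 := by linarith
        have hnz0 : (0:ℝ) ≤ ‖z‖ := norm_nonneg _
        have hsq : ‖z‖^2 = z.re^2 + z.im^2 := by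
          rw [Complex.sq_norm, Complex.normSq_apply]; ring
        have hx0 : 0 ≤ z.re := by
          have : z.re - 1 ≥ -|z.re - 1| := neg_abs_le _
          nlinarith
        have h1 : |z.re - 1| ≤ |z.re^2 - 1| := by
          have he : z.re^2 - 1 = (z.re - 1)*(z.re + 1) := by ring
          rw [he, abs_mul, abs_of_nonneg (by linarith : (0:ℝ) ≤ z.re + 1)]
          nlinarith [abs_nonneg (z.re - 1)]
        have h2 : |z.re^2 - 1| ≤ |‖z‖^2 - 1| + z.im^2 := by
          have : z.re^2 - 1 = (‖z‖^2 - 1) - z.im^2 := by rw [hsq]; ring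
          rw [this]
          calc |(‖z‖^2 - 1) - z.im^2| ≤ |‖z‖^2 - 1| + |z.im^2| := abs_sub _ _
            _ = |‖z‖^2 - 1| + z.im^2 := by rw [abs_of_nonneg (sq_nonneg z.im)]
        have h3 : |‖z‖^2 - 1| = t * (‖z‖ + 1) := by
          have he : ‖z‖^2 - 1 = (‖z‖ - 1) * (‖z‖ + 1) := by ring
          rw [he, abs_mul, abs_of_nonneg (by linarith : (0:ℝ) ≤ ‖z‖ + 1)]
        have hy2 : z.im^2 ≤ r^2 := by
          nlinarith [him, hzb, abs_nonneg z.im, sq_abs z.im]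
        have hfin : |z.re - 1| ≤ c := by
          have ht0' : 0 ≤ t := abs_nonneg _
          have h4 : t * (‖z‖ + 1) ≤ t * 3 := mul_le_mul_of_nonneg_left (by linarith) ht0'
          have h5 : t * 3 ≤ (r^(N+1)/A) * 3 := mul_le_mul_of_nonneg_right ht.le (by norm_num)
          have : t * (‖z‖ + 1) ≤ (r^(N+1)/A) * 3 := h4.trans h5
          rw [hc]
          calc |z.re - 1| ≤ |z.re^2 - 1| := h1
            _ ≤ |‖z‖^2 - 1| + z.im^2 := h2
            _ = t * (‖z‖ + 1) + z.im^2 := by rw [h3]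
            _ ≤ (r^(N+1)/A) * 3 + r^2 := by linarith
            _ = 3 * r^(N+1)/A + r^2 := by ring
        have hfin2 : |z.im| ≤ r := him.trans hzb.le
        simp only [Set.mem_preimage, Complex.measurableEquivRealProd_apply, Set.mem_prod,
          Set.mem_Icc]
        refine ⟨⟨?_, ?_⟩, ?_, ?_⟩
        · linarith [neg_abs_le (z.re - 1)]
        · linarith [le_abs_self (z.re - 1)]
        · linarith [neg_abs_le z.im]
        · linarith [le_abs_self z.im]
      have hrect : volume (Complex.measurableEquivRealProd ⁻¹'
          (Set.Icc (1-c) (1+c) ×ˢ Set.Icc (-r) r)) = ENNReal.ofReal (4*c*r) := by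
        rw [Complex.volume_preserving_equiv_real_prod.measure_preimage_equiv,
          Measure.volume_eq_prod, Measure.prod_prod, Real.volume_Icc, Real.volume_Icc,
          ← ENNReal.ofReal_mul (by linarith)]
        congr 1
        ring
      have hball : volume (Metric.ball (1:ℂ) r) = ENNReal.ofReal (Real.pi * r^2) := by
        rw [Complex.volume_ball, ← ENNReal.ofReal_pow hr0.le,
          show ((NNReal.pi : ℝ≥0∞)) = ENNReal.ofReal Real.pi from by
            rw [← NNReal.coe_real_pi, ENNReal.ofReal_coe_nnreal],
          ← ENNReal.ofReal_mul (by positivity)]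
        congr 1
        ring
      have hcover : volume (Metric.ball (1:ℂ) r)
          ≤ volume (Λ ∩ Metric.ball (1:ℂ) r) + ENNReal.ofReal (4*c*r) := by
        calc volume (Metric.ball (1:ℂ) r)
            ≤ volume ((Λ ∩ Metric.ball (1:ℂ) r) ∪ (Metric.ball (1:ℂ) r \ Λ)) := by
              apply measure_mono
              intro z hz
              by_cases hzΛ : z ∈ Λ
              · exact Set.mem_union_left _ ⟨hzΛ, hz⟩
              · exact Set.mem_union_right _ ⟨hz, hzΛ⟩
          _ ≤ volume (Λ ∩ Metric.ball (1:ℂ) r) + volume (Metric.ball (1:ℂ) r \ Λ) :=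
              measure_union_le _ _
          _ ≤ volume (Λ ∩ Metric.ball (1:ℂ) r) + ENNReal.ofReal (4*c*r) := by
              gcongr
              rw [← hrect]
              exact measure_mono hsub
      have hlow : ENNReal.ofReal (Real.pi*r^2 - 4*c*r) ≤ volume (Λ ∩ Metric.ball (1:ℂ) r) := by
        have h1 : volume (Metric.ball (1:ℂ) r) - ENNReal.ofReal (4*c*r)
            ≤ volume (Λ ∩ Metric.ball (1:ℂ) r) := tsub_le_iff_right.mpr hcover
        refine le_trans ?_ h1
        rw [hball, ← ENNReal.ofReal_sub _ (by positivity)]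
      have heq : (Real.pi*r^2 - 4*c*r)/(Real.pi*r^2) = 1 - (12*r^N/A + 4*r)/Real.pi := by
        rw [hc]
        field_simp
        ring
      calc ENNReal.ofReal (1 - (12*r^N/A + 4*r)/Real.pi)
          = ENNReal.ofReal ((Real.pi*r^2 - 4*c*r)/(Real.pi*r^2)) := by rw [heq]
        _ = ENNReal.ofReal (Real.pi*r^2 - 4*c*r) / ENNReal.ofReal (Real.pi*r^2) :=
            ENNReal.ofReal_div_of_pos (by positivity)
        _ ≤ volume (Λ ∩ Metric.ball (1:ℂ) r) / volume (Metric.ball (1:ℂ) r) := by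
            rw [hball]
            exact ENNReal.div_le_div_right hlow _
    · -- upper bound by 1
      filter_upwards with r
      exact ENNReal.div_le_of_le_mul (by rw [one_mul]; exact measure_mono Set.inter_subset_right)
  · -- circle density
    intro hdτ
    have hN0 : N ≠ 0 := Nat.one_le_iff_ne_zero.mp hN
    have hπ := Real.pi_pos
    set T : ℝ≥0∞ := ∑' k : {k : Fin d → ℤ // k ≠ 0},
      ENNReal.ofReal ((intNorm k.1) ^ (-τ)) with hTdef
    have hTne : T ≠ ∞ := by
      have := key_tsum_ne_top hd hdτ
      simpa [hTdef, intNorm] using this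
    set Z : ℝ := T.toReal with hZdef
    have hZ0 : 0 ≤ Z := ENNReal.toReal_nonneg
    have hTeq : T = ENNReal.ofReal Z := (ENNReal.ofReal_toReal hTne).symm
    set κ : ℝ := (2*Real.pi)^(N+1) * Z / A with hκ
    have hκ0 : 0 ≤ κ := by positivity
    have hgt : Filter.Tendsto (fun r : ℝ => ENNReal.ofReal (1 - κ/2 * r^N))
        (nhdsWithin 0 (Set.Ioi 0)) (nhds 1) := by
      have hc : Continuous (fun r : ℝ => 1 - κ/2 * r^N) := by fun_prop
      have h2 := hc.tendsto 0
      norm_num [zero_pow hN0] at h2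
      have h3 : Filter.Tendsto (fun r : ℝ => 1 - κ/2 * r^N)
          (nhdsWithin 0 (Set.Ioi 0)) (nhds 1) := h2.mono_left nhdsWithin_le_nhds
      have := (ENNReal.continuous_ofReal.tendsto 1).comp h3
      simpa [Function.comp_def] using this
    have hev1 : ∀ᶠ r : ℝ in nhdsWithin 0 (Set.Ioi 0), (2*Real.pi*r)^(N+1)/(4*A) < 1/4 := by
      have hc : Continuous (fun r : ℝ => (2*Real.pi*r)^(N+1)/(4*A)) := by fun_prop
      have h2 := hc.tendsto 0
      norm_num [zero_pow (Nat.succ_ne_zero N)] at h2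
      exact ((h2.mono_left nhdsWithin_le_nhds).eventually_lt_const (by norm_num))
    refine tendsto_of_tendsto_of_tendsto_of_le_of_le' hgt tendsto_const_nhds ?_ ?_
    · filter_upwards [Ioo_mem_nhdsGT_of_mem
        (Set.mem_Ico.mpr ⟨le_refl (0:ℝ), (by norm_num : (0:ℝ) < (1:ℝ)/4)⟩), hev1] with r hr hρmax
      obtain ⟨hr0, hr4⟩ := hr
      set ρ : {k : Fin d → ℤ // k ≠ 0} → ℝ :=
        fun k => (2*Real.pi*r)^(N+1) * (intNorm k.1)^(-τ) / (4*A) with hρdef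
      have hρpos : ∀ k, 0 < ρ k := by
        intro k
        have h1 : 0 < (intNorm k.1)^(-τ) := Real.rpow_pos_of_pos (intNorm_pos k.2) _
        rw [hρdef]
        positivity
      have hρle : ∀ k, ρ k < 1/4 := by
        intro k
        have h1 : (intNorm k.1)^(-τ) ≤ 1 :=
          Real.rpow_le_one_of_one_le_of_nonpos (one_le_intNorm k.2) (by linarith)
        have h2 : ρ k ≤ (2*Real.pi*r)^(N+1)/(4*A) := by
          rw [hρdef, div_le_div_iff₀ (by positivity) (by positivity)]
          have : (2*Real.pi*r)^(N+1) * (intNorm k.1)^(-τ) ≤ (2*Real.pi*r)^(N+1) * 1 :=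
            mul_le_mul_of_nonneg_left h1 (by positivity)
          nlinarith
        exact lt_of_le_of_lt h2 hρmax
      set S : {k : Fin d → ℤ // k ≠ 0} → Finset ℤ := fun k =>
        Finset.Icc ⌈intDot k.1 ω - r - ρ k⌉ ⌊intDot k.1 ω + r + ρ k⌋ with hSdef
      have hsub : {x ∈ Set.Ioo (-r) r |
            Complex.exp (2 * Real.pi * Complex.I * (x:ℂ)) ∉ LambdaSet ω τ N A}
          ⊆ ⋃ k : {k : Fin d → ℤ // k ≠ 0}, ⋃ m ∈ S k,
              Metric.ball (intDot k.1 ω - (m:ℝ)) (ρ k) := by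
        rintro x ⟨hxI, hxΛ⟩
        obtain ⟨hx1, hx2⟩ := hxI
        have hxr : |x| < r := abs_lt.mpr ⟨by linarith, hx2⟩
        obtain ⟨k, hk⟩ := exists_bad_mode hxΛ
        set lam : ℂ := Complex.exp (2 * Real.pi * Complex.I * (x:ℂ)) with hlam
        set u : ℝ := intDot k.1 ω - x with hu
        set m : ℤ := round u with hm
        have hs : ‖lam - 1‖ ≤ 2*Real.pi*r := by
          refine (norm_expTwoPi_le x).trans ?_
          have : 2*Real.pi*|x| ≤ 2*Real.pi*r := by nlinarith
          linarith
        have hspow : ‖lam - 1‖^(N+1) ≤ (2*Real.pi*r)^(N+1) :=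
          pow_le_pow_left₀ (norm_nonneg _) hs _
        have heq : eDot k.1 ω - lam
            = lam * (Complex.exp (2 * Real.pi * Complex.I * ((u:ℝ):ℂ)) - 1) := by
          rw [mul_sub, mul_one, hlam, ← Complex.exp_add, eDot]
          congr 2
          push_cast [hu]
          ring
        have hbe : ‖eDot k.1 ω - lam‖
            = ‖Complex.exp (2 * Real.pi * Complex.I * ((u:ℝ):ℂ)) - 1‖ := by
          rw [heq, norm_mul, hlam, norm_expTwoPi_eq_one, one_mul]
        have hblow : 4*|u - m| ≤ ‖eDot k.1 ω - lam‖ := by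
          rw [hbe]; exact norm_expTwoPi_ge u
        have hum : |u - m| < ρ k := by
          rcases (norm_nonneg (eDot k.1 ω - lam)).eq_or_lt with hb0 | hbpos
          · have h0 : |u - (m:ℝ)| = 0 :=
              le_antisymm (by linarith [hblow, hb0.symm ▸ (le_refl (0:ℝ))]) (abs_nonneg _)
            rw [h0]; exact hρpos k
          · rw [ENNReal.ofReal_rpow_of_pos (intNorm_pos k.2),
              ← ENNReal.ofReal_inv_of_pos hbpos,
              ← ENNReal.ofReal_mul (by positivity),
              ← ENNReal.ofReal_mul (mul_nonneg (inv_nonneg.mpr (norm_nonneg _))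
                (Real.rpow_pos_of_pos (intNorm_pos k.2) _).le)] at hk
            have hk' : A < ‖eDot k.1 ω - lam‖⁻¹ * (intNorm k.1)^(-τ) * ‖lam - 1‖^(N+1) :=
              (ENNReal.ofReal_lt_ofReal_iff_of_nonneg hA.le).mp hk
            have hbA : ‖eDot k.1 ω - lam‖ * A
                < (intNorm k.1)^(-τ) * ‖lam - 1‖^(N+1) := by
              have := mul_lt_mul_of_pos_left hk' hbpos
              rwa [← mul_assoc, ← mul_assoc, mul_inv_cancel₀ hbpos.ne', one_mul] at this
            have hrpow0 : 0 ≤ (intNorm k.1)^(-τ) :=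
              (Real.rpow_pos_of_pos (intNorm_pos k.2) _).le
            have hQ : (intNorm k.1)^(-τ) * ‖lam - 1‖^(N+1)
                ≤ (intNorm k.1)^(-τ) * (2*Real.pi*r)^(N+1) :=
              mul_le_mul_of_nonneg_left hspow hrpow0
            rw [hρdef, lt_div_iff₀ (by positivity)]
            have h1 : 4*|u - m| * A ≤ ‖eDot k.1 ω - lam‖ * A :=
              mul_le_mul_of_nonneg_right hblow hA.le
            calc |u - (m:ℝ)| * (4*A) = 4*|u - m| * A := by ring
              _ ≤ ‖eDot k.1 ω - lam‖ * A := h1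
              _ < (intNorm k.1)^(-τ) * ‖lam - 1‖^(N+1) := hbA
              _ ≤ (intNorm k.1)^(-τ) * (2*Real.pi*r)^(N+1) := hQ
              _ = (2*Real.pi*r)^(N+1) * (intNorm k.1)^(-τ) := by ring
        refine Set.mem_iUnion.mpr ⟨k, Set.mem_iUnion.mpr ⟨m, Set.mem_iUnion.mpr ⟨?_, ?_⟩⟩⟩
        · -- m ∈ S k
          have hub : (u:ℝ) ≤ intDot k.1 ω + r := by rw [hu]; linarith [abs_lt.mp hxr]
          have hlb : intDot k.1 ω - r ≤ u := by rw [hu]; linarith [abs_lt.mp hxr]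
          have hmu : |u - m| < ρ k := hum
          obtain ⟨hd1, hd2⟩ := abs_lt.mp hmu
          rw [hSdef]
          refine Finset.mem_Icc.mpr ⟨?_, ?_⟩
          · exact Int.ceil_le.mpr (by push_cast; linarith)
          · exact Int.le_floor.mpr (by push_cast; linarith)
        · -- x ∈ ball
          rw [Metric.mem_ball, Real.dist_eq]
          have : x - (intDot k.1 ω - (m:ℝ)) = -(u - m) := by rw [hu]; ring
          rw [this, abs_neg]
          exact hum
      have hperk : ∀ k : {k : Fin d → ℤ // k ≠ 0},
          volume (⋃ m ∈ S k, Metric.ball (intDot k.1 ω - (m:ℝ)) (ρ k))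
            ≤ ENNReal.ofReal (4 * ρ k) := by
        intro k
        have hcard : (S k).card ≤ 2 := by
          rw [hSdef, Int.card_Icc]
          have h1 : (⌊intDot k.1 ω + r + ρ k⌋ : ℝ) ≤ intDot k.1 ω + r + ρ k :=
            Int.floor_le _
          have h2 : intDot k.1 ω - r - ρ k ≤ (⌈intDot k.1 ω - r - ρ k⌉ : ℝ) :=
            Int.le_ceil _
          have h3 : ⌊intDot k.1 ω + r + ρ k⌋ + 1 - ⌈intDot k.1 ω - r - ρ k⌉ ≤ 2 := by
            have : (⌊intDot k.1 ω + r + ρ k⌋ : ℝ) + 1 - ⌈intDot k.1 ω - r - ρ k⌉ ≤ 2 := by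
              have hρk := hρle k
              linarith
            exact_mod_cast this
          exact (Int.toNat_le).mpr h3 |>.trans (le_refl 2)
        calc volume (⋃ m ∈ S k, Metric.ball (intDot k.1 ω - (m:ℝ)) (ρ k))
            ≤ ∑ m ∈ S k, volume (Metric.ball (intDot k.1 ω - (m:ℝ)) (ρ k)) :=
              measure_biUnion_finset_le _ _
          _ = ∑ _m ∈ S k, ENNReal.ofReal (2 * ρ k) := by
              refine Finset.sum_congr rfl fun m _ => ?_
              rw [Real.volume_ball]
          _ = ((S k).card : ℝ≥0∞) * ENNReal.ofReal (2 * ρ k) := by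
              rw [Finset.sum_const, nsmul_eq_mul]
          _ ≤ 2 * ENNReal.ofReal (2 * ρ k) := by
              gcongr
              exact_mod_cast hcard
          _ = ENNReal.ofReal (4 * ρ k) := by
              rw [show ((2:ℝ≥0∞)) = ENNReal.ofReal (2:ℝ) from by norm_num,
                ← ENNReal.ofReal_mul (by norm_num)]
              congr 1
              ring
      have hbadvol : volume {x ∈ Set.Ioo (-r) r |
            Complex.exp (2 * Real.pi * Complex.I * (x:ℂ)) ∉ LambdaSet ω τ N A}
          ≤ ENNReal.ofReal (κ * r^(N+1)) := by
        calc volume {x ∈ Set.Ioo (-r) r |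
              Complex.exp (2 * Real.pi * Complex.I * (x:ℂ)) ∉ LambdaSet ω τ N A}
            ≤ volume (⋃ k : {k : Fin d → ℤ // k ≠ 0}, ⋃ m ∈ S k,
                Metric.ball (intDot k.1 ω - (m:ℝ)) (ρ k)) := measure_mono hsub
          _ ≤ ∑' k : {k : Fin d → ℤ // k ≠ 0},
                volume (⋃ m ∈ S k, Metric.ball (intDot k.1 ω - (m:ℝ)) (ρ k)) :=
              measure_iUnion_le _
          _ ≤ ∑' k : {k : Fin d → ℤ // k ≠ 0}, ENNReal.ofReal (4 * ρ k) :=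
              ENNReal.tsum_le_tsum hperk
          _ = ∑' k : {k : Fin d → ℤ // k ≠ 0},
                ENNReal.ofReal ((2*Real.pi*r)^(N+1)/A) * ENNReal.ofReal ((intNorm k.1)^(-τ)) := by
              refine tsum_congr fun k => ?_
              rw [← ENNReal.ofReal_mul (by positivity)]
              congr 1
              rw [hρdef]
              field_simp
          _ = ENNReal.ofReal ((2*Real.pi*r)^(N+1)/A) * T := by
              rw [ENNReal.tsum_mul_left, hTdef]
          _ = ENNReal.ofReal (κ * r^(N+1)) := by
              rw [hTeq, ← ENNReal.ofReal_mul (by positivity)]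
              congr 1
              rw [hκ]
              field_simp
              ring
      have hIoo : volume (Set.Ioo (-r) r) = ENNReal.ofReal (2*r) := by
        rw [Real.volume_Ioo]
        congr 1
        ring
      have hcover : ENNReal.ofReal (2*r)
          ≤ volume {x ∈ Set.Ioo (-r) r |
              Complex.exp (2 * Real.pi * Complex.I * (x:ℂ)) ∈ LambdaSet ω τ N A}
            + ENNReal.ofReal (κ * r^(N+1)) := by
        calc ENNReal.ofReal (2*r) = volume (Set.Ioo (-r) r) := hIoo.symm
          _ ≤ volume ({x ∈ Set.Ioo (-r) r |
                Complex.exp (2 * Real.pi * Complex.I * (x:ℂ)) ∈ LambdaSet ω τ N A}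
              ∪ {x ∈ Set.Ioo (-r) r |
                Complex.exp (2 * Real.pi * Complex.I * (x:ℂ)) ∉ LambdaSet ω τ N A}) := by
              apply measure_mono
              intro x hx
              by_cases hxΛ : Complex.exp (2 * Real.pi * Complex.I * (x:ℂ)) ∈ LambdaSet ω τ N A
              · exact Set.mem_union_left _ ⟨hx, hxΛ⟩
              · exact Set.mem_union_right _ ⟨hx, hxΛ⟩
          _ ≤ volume {x ∈ Set.Ioo (-r) r |
                Complex.exp (2 * Real.pi * Complex.I * (x:ℂ)) ∈ LambdaSet ω τ N A}
              + volume {x ∈ Set.Ioo (-r) r |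
                Complex.exp (2 * Real.pi * Complex.I * (x:ℂ)) ∉ LambdaSet ω τ N A} :=
              measure_union_le _ _
          _ ≤ _ := by gcongr
      have hlow : ENNReal.ofReal (2*r - κ * r^(N+1))
          ≤ volume {x ∈ Set.Ioo (-r) r |
              Complex.exp (2 * Real.pi * Complex.I * (x:ℂ)) ∈ LambdaSet ω τ N A} := by
        have h1 := tsub_le_iff_right.mpr hcover
        refine le_trans ?_ h1
        rw [← ENNReal.ofReal_sub _ (by positivity)]
      have heq2 : (2*r - κ * r^(N+1))/(2*r) = 1 - κ/2 * r^N := by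
        field_simp
        ring
      calc ENNReal.ofReal (1 - κ/2 * r^N)
          = ENNReal.ofReal ((2*r - κ * r^(N+1))/(2*r)) := by rw [heq2]
        _ = ENNReal.ofReal (2*r - κ * r^(N+1)) / ENNReal.ofReal (2*r) :=
            ENNReal.ofReal_div_of_pos (by positivity)
        _ ≤ _ := ENNReal.div_le_div_right hlow _
    · filter_upwards with r
      refine ENNReal.div_le_of_le_mul ?_
      rw [one_mul]
      calc volume {x ∈ Set.Ioo (-r) r |
            Complex.exp (2 * Real.pi * Complex.I * (x:ℂ)) ∈ LambdaSet ω τ N A}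
          ≤ volume (Set.Ioo (-r) r) := measure_mono (Set.sep_subset _ _)
        _ ≤ ENNReal.ofReal (2*r) := by
            rw [Real.volume_Ioo]
            exact ENNReal.ofReal_le_ofReal (by linarith [le_refl r])

end KAM
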